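/- arXiv:2101.03528 — 4 statements merged into one kernel-verified Lean document; each statement's English description precedes it below -/
import Mathlib

section
/- Let L be a coatomic logic. Then the semisimple companion L^σ is the largest logic with the same simple theories as L: the simple theories of L^σ are exactly the simple theories of L, and every logic L' (on the same formula algebra) whose simple theories coincide with those of L satisfies Γ ⊢_{L'} φ ⟹ Γ ⊢_{L^σ} φ for all Γ, φ. In particular, L^σ is coatomic. -/
set_option linter.unusedVariables false

open FirstOrder Set

universe u

/-- Substitution composition for terms of a first-order language. -/
theorem FirstOrder.Language.Term.subst_subst' {L : FirstOrder.Language.{u, u}} {α β γ : Type u}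
    (t : L.Term α) (f : α → L.Term β) (g : β → L.Term γ) :
    (t.subst f).subst g = t.subst (fun i => (f i).subst g) := by
  induction t with
  | var => rfl
  | func f ts ih => simp only [Language.Term.subst, ih]

/-- A logic over the absolutely free algebra of `L`-terms in variables `Var`. -/
structure Logic (L : FirstOrder.Language.{u, u}) (Var : Type u) where
  Deriv : Set (L.Term Var) → L.Term Var → Prop
  deriv_refl : ∀ φ : L.Term Var, Deriv {φ} φ
  deriv_mono : ∀ {Γ Δ : Set (L.Term Var)} {φ : L.Term Var}, Deriv Γ φ → Γ ⊆ Δ → Deriv Δ φ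
  deriv_cut : ∀ {Γ Φ : Set (L.Term Var)} {φ : L.Term Var},
      (∀ ψ ∈ Φ, Deriv Γ ψ) → Deriv Φ φ → Deriv Γ φ
  deriv_subst : ∀ {Γ : Set (L.Term Var)} {φ : L.Term Var} (σ : Var → L.Term Var),
      Deriv Γ φ → Deriv ((fun t => t.subst σ) '' Γ) (φ.subst σ)

namespace Logic

variable {L : FirstOrder.Language.{u, u}} {Var : Type u} (Lg : Logic L Var)

/-- `Γ ⊢ φ` for every `φ ∈ Δ`. -/
def DerivAll (Γ Δ : Set (L.Term Var)) : Prop := ∀ φ ∈ Δ, Lg.Deriv Γ φ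

/-- `Γ ⊢ Fm`, i.e. `Γ` derives every formula. -/
def Inc (Γ : Set (L.Term Var)) : Prop := ∀ φ : L.Term Var, Lg.Deriv Γ φ

/-- A theory of the logic: a deductively closed set of formulas. -/
def IsTheory (T : Set (L.Term Var)) : Prop := ∀ φ : L.Term Var, Lg.Deriv T φ → φ ∈ T

/-- A simple theory: a maximal non-trivial theory. -/
def IsSimple (T : Set (L.Term Var)) : Prop :=
  Lg.IsTheory T ∧ T ≠ univ ∧
    ∀ T' : Set (L.Term Var), Lg.IsTheory T' → T' ≠ univ → T ⊆ T' → T' = T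

/-- A semisimple theory: an intersection of simple theories. -/
def IsSemisimple (T : Set (L.Term Var)) : Prop :=
  ∃ S : Set (Set (L.Term Var)), (∀ U ∈ S, Lg.IsSimple U) ∧ T = ⋂₀ S

/-- A semisimple logic: every theory is an intersection of simple theories. -/
def Semisimple : Prop := ∀ T : Set (L.Term Var), Lg.IsTheory T → Lg.IsSemisimple T

/-- A coatomic logic: every non-trivial theory extends to a simple theory. -/
def Coatomic : Prop :=
  ∀ T : Set (L.Term Var), Lg.IsTheory T → T ≠ univ → ∃ U, Lg.IsSimple U ∧ T ⊆ U

/-- A matrix `⟨A, F⟩` is a model of the logic if the preimage of `F` under any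
homomorphism (equivalently, the realization along any valuation) is a theory. -/
def IsModel (A : Type u) [L.Structure A] (F : Set A) : Prop :=
  ∀ v : Var → A, Lg.IsTheory {φ : L.Term Var | φ.realize v ∈ F}

/-- `Γ ⊢ ∅`: `Γ` cannot be jointly designated in any non-trivial model. -/
def Antitheorem (Γ : Set (L.Term Var)) : Prop :=
  ∀ (A : Type u) [L.Structure A], ∀ F : Set A, Lg.IsModel A F → F ≠ univ →
    ∀ v : Var → A, ¬((fun φ : L.Term Var => φ.realize v) '' Γ ⊆ F)

/-- κ-compactness: every inconsistent set has an inconsistent subset of size `< κ`. -/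
def Compact (κ : Cardinal.{u}) : Prop :=
  ∀ Γ : Set (L.Term Var), Lg.Inc Γ → ∃ Γ' ⊆ Γ, Cardinal.mk ↥Γ' < κ ∧ Lg.Inc Γ'

/-- κ-arity: any derivation uses fewer than κ premises. -/
def Ary (κ : Cardinal.{u}) : Prop :=
  ∀ (Γ : Set (L.Term Var)) (φ : L.Term Var), Lg.Deriv Γ φ →
    ∃ Γ' ⊆ Γ, Cardinal.mk ↥Γ' < κ ∧ Lg.Deriv Γ' φ

end Logic

/-- A parametrized family: for each ordinal `α`, a family of sets of formulas in
`α`-many variable slots together with parameter slots (indexed by `Var`). -/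
abbrev PFam (L : FirstOrder.Language.{u, u}) (Var : Type u) : Type (u + 1) :=
  ∀ α : Ordinal.{u}, Set (Set (L.Term (α.ToType ⊕ Var)))

/-- A local (parameter-free) family. -/
abbrev LFam (L : FirstOrder.Language.{u, u}) (Var : Type u) : Type (u + 1) :=
  ∀ α : Ordinal.{u}, Set (Set (L.Term α.ToType))

/-- A global family: a single set of formulas for each ordinal `α`. -/
abbrev GFam (L : FirstOrder.Language.{u, u}) (Var : Type u) : Type (u + 1) :=
  ∀ α : Ordinal.{u}, Set (L.Term α.ToType)

namespace Logic

variable {L : FirstOrder.Language.{u, u}} {Var : Type u}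

/-- `I(φ̄, π̄)`: instantiation of a parametrized set of formulas. -/
def pInst {α : Ordinal.{u}} (I : Set (L.Term (α.ToType ⊕ Var)))
    (phis : α.ToType → L.Term Var) (pis : Var → L.Term Var) : Set (L.Term Var) :=
  (fun t => t.subst (Sum.elim phis pis)) '' I

/-- `I(φ̄)`: instantiation of a parameter-free set of formulas. -/
def lInst {α : Ordinal.{u}} (I : Set (L.Term α.ToType))
    (phis : α.ToType → L.Term Var) : Set (L.Term Var) :=
  (fun t => t.subst phis) '' I

variable (Lg : Logic L Var)

/-- The κ-ary parametrized local inconsistency lemma w.r.t. the family `Ψ`. -/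
def ParamLocalIL (κ : Cardinal.{u}) (Ψ : PFam L Var) : Prop :=
  ∀ α : Ordinal.{u}, 0 < α → α < κ.ord →
    ∀ (Γ : Set (L.Term Var)) (phis : α.ToType → L.Term Var),
      Lg.Inc (Γ ∪ range phis) ↔
        ∃ I ∈ Ψ α, ∃ pis : Var → L.Term Var, Lg.DerivAll Γ (pInst I phis pis)

/-- The κ-ary local inconsistency lemma w.r.t. the family `Ψ`. -/
def LocalIL (κ : Cardinal.{u}) (Ψ : LFam L Var) : Prop :=
  ∀ α : Ordinal.{u}, 0 < α → α < κ.ord →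
    ∀ (Γ : Set (L.Term Var)) (phis : α.ToType → L.Term Var),
      Lg.Inc (Γ ∪ range phis) ↔ ∃ I ∈ Ψ α, Lg.DerivAll Γ (lInst I phis)

/-- The κ-ary global inconsistency lemma w.r.t. the family `Ψ`. -/
def GlobalIL (κ : Cardinal.{u}) (Ψ : GFam L Var) : Prop :=
  Lg.LocalIL κ (fun α => {Ψ α})

/-- The κ-ary dual parametrized local inconsistency lemma w.r.t. the family `Ψ`. -/
def DualParamLocalIL (κ : Cardinal.{u}) (Ψ : PFam L Var) : Prop :=
  ∀ α : Ordinal.{u}, 0 < α → α < κ.ord →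
    ∀ (Γ : Set (L.Term Var)) (phis : α.ToType → L.Term Var),
      (∀ i, Lg.Deriv Γ (phis i)) ↔
        ∀ I ∈ Ψ α, ∀ pis : Var → L.Term Var, Lg.Inc (Γ ∪ pInst I phis pis)

/-- The κ-ary dual local inconsistency lemma w.r.t. the family `Ψ`. -/
def DualLocalIL (κ : Cardinal.{u}) (Ψ : LFam L Var) : Prop :=
  ∀ α : Ordinal.{u}, 0 < α → α < κ.ord →
    ∀ (Γ : Set (L.Term Var)) (phis : α.ToType → L.Term Var),
      (∀ i, Lg.Deriv Γ (phis i)) ↔ ∀ I ∈ Ψ α, Lg.Inc (Γ ∪ lInst I phis)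

/-- The κ-ary dual global inconsistency lemma w.r.t. the family `Ψ`. -/
def DualGlobalIL (κ : Cardinal.{u}) (Ψ : GFam L Var) : Prop :=
  Lg.DualLocalIL κ (fun α => {Ψ α})

/-- The κ-ary classical parametrized local IL: both the ordinary and dual IL. -/
def ClassicalParamLocalIL (κ : Cardinal.{u}) (Ψ : PFam L Var) : Prop :=
  Lg.ParamLocalIL κ Ψ ∧ Lg.DualParamLocalIL κ Ψ

/-- The κ-ary classical local IL: both the ordinary and dual IL. -/
def ClassicalLocalIL (κ : Cardinal.{u}) (Ψ : LFam L Var) : Prop :=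
  Lg.LocalIL κ Ψ ∧ Lg.DualLocalIL κ Ψ

/-- The κ-ary classical global IL: both the ordinary and dual IL. -/
def ClassicalGlobalIL (κ : Cardinal.{u}) (Ψ : GFam L Var) : Prop :=
  Lg.GlobalIL κ Ψ ∧ Lg.DualGlobalIL κ Ψ

/-- The κ-ary parametrized local law of the excluded middle w.r.t. `Ψ`. -/
def ParamLocalLEM (κ : Cardinal.{u}) (Ψ : PFam L Var) : Prop :=
  (∀ α : Ordinal.{u}, 0 < α → α < κ.ord → ∀ I ∈ Ψ α,
    ∀ (phis : α.ToType → L.Term Var) (pis : Var → L.Term Var),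
      Lg.Inc (range phis ∪ pInst I phis pis)) ∧
  (∀ α : Ordinal.{u}, 0 < α → α < κ.ord →
    ∀ (Γ : Set (L.Term Var)) (phis : α.ToType → L.Term Var) (ψ : L.Term Var),
      Lg.Deriv (Γ ∪ range phis) ψ →
      (∀ I ∈ Ψ α, ∀ pis : Var → L.Term Var, Lg.Deriv (Γ ∪ pInst I phis pis) ψ) →
      Lg.Deriv Γ ψ)

/-- The κ-ary local law of the excluded middle w.r.t. `Ψ`. -/
def LocalLEM (κ : Cardinal.{u}) (Ψ : LFam L Var) : Prop :=
  (∀ α : Ordinal.{u}, 0 < α → α < κ.ord → ∀ I ∈ Ψ α,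
    ∀ phis : α.ToType → L.Term Var, Lg.Inc (range phis ∪ lInst I phis)) ∧
  (∀ α : Ordinal.{u}, 0 < α → α < κ.ord →
    ∀ (Γ : Set (L.Term Var)) (phis : α.ToType → L.Term Var) (ψ : L.Term Var),
      Lg.Deriv (Γ ∪ range phis) ψ →
      (∀ I ∈ Ψ α, Lg.Deriv (Γ ∪ lInst I phis) ψ) → Lg.Deriv Γ ψ)

/-- The κ-ary simple parametrized local IL w.r.t. `Ψ`. -/
def SimpleParamLocalIL (κ : Cardinal.{u}) (Ψ : PFam L Var) : Prop :=
  (∀ α : Ordinal.{u}, 0 < α → α < κ.ord → ∀ I ∈ Ψ α,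
    ∀ (phis : α.ToType → L.Term Var) (pis : Var → L.Term Var),
      Lg.Inc (range phis ∪ pInst I phis pis)) ∧
  (∀ α : Ordinal.{u}, 0 < α → α < κ.ord →
    ∀ T : Set (L.Term Var), Lg.IsSimple T → ∀ phis : α.ToType → L.Term Var,
      Lg.Inc (T ∪ range phis) →
        ∃ I ∈ Ψ α, ∃ pis : Var → L.Term Var, Lg.DerivAll T (pInst I phis pis))

/-- The κ-ary simple local IL w.r.t. `Ψ`. -/
def SimpleLocalIL (κ : Cardinal.{u}) (Ψ : LFam L Var) : Prop :=
  (∀ α : Ordinal.{u}, 0 < α → α < κ.ord → ∀ I ∈ Ψ α,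
    ∀ phis : α.ToType → L.Term Var, Lg.Inc (range phis ∪ lInst I phis)) ∧
  (∀ α : Ordinal.{u}, 0 < α → α < κ.ord →
    ∀ T : Set (L.Term Var), Lg.IsSimple T → ∀ phis : α.ToType → L.Term Var,
      Lg.Inc (T ∪ range phis) → ∃ I ∈ Ψ α, Lg.DerivAll T (lInst I phis))

end Logic

/-- Family for the parametrized local DDT: sets of formulas `I(p̄, q, r̄)`. -/
abbrev PFamD (L : FirstOrder.Language.{u, u}) (Var : Type u) : Type (u + 1) :=
  ∀ α : Ordinal.{u}, Set (Set (L.Term (α.ToType ⊕ (PUnit.{u + 1} ⊕ Var))))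

/-- Family for the local DDT: sets of formulas `I(p̄, q)`. -/
abbrev LFamD (L : FirstOrder.Language.{u, u}) (Var : Type u) : Type (u + 1) :=
  ∀ α : Ordinal.{u}, Set (Set (L.Term (α.ToType ⊕ PUnit.{u + 1})))

/-- Family for the global DDT: a single set `I(p̄, q)` for each `α`. -/
abbrev GFamD (L : FirstOrder.Language.{u, u}) (Var : Type u) : Type (u + 1) :=
  ∀ α : Ordinal.{u}, Set (L.Term (α.ToType ⊕ PUnit.{u + 1}))

namespace Logic

variable {L : FirstOrder.Language.{u, u}} {Var : Type u}

/-- `I(φ̄, ψ)`: instantiation of a DDT set of formulas. -/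
def dInst {α : Ordinal.{u}} (I : Set (L.Term (α.ToType ⊕ PUnit.{u + 1})))
    (phis : α.ToType → L.Term Var) (ψ : L.Term Var) : Set (L.Term Var) :=
  (fun t => t.subst (Sum.elim phis (fun _ => ψ))) '' I

/-- `I(φ̄, ψ, π̄)`: instantiation of a parametrized DDT set of formulas. -/
def pdInst {α : Ordinal.{u}} (I : Set (L.Term (α.ToType ⊕ (PUnit.{u + 1} ⊕ Var))))
    (phis : α.ToType → L.Term Var) (ψ : L.Term Var) (pis : Var → L.Term Var) :
    Set (L.Term Var) :=
  (fun t => t.subst (Sum.elim phis (Sum.elim (fun _ => ψ) pis))) '' I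

variable (Lg : Logic L Var)

/-- The κ-ary local deduction--detachment theorem w.r.t. `Φ`. -/
def LocalDDT (κ : Cardinal.{u}) (Φ : LFamD L Var) : Prop :=
  ∀ α : Ordinal.{u}, 0 < α → α < κ.ord →
    ∀ (Γ : Set (L.Term Var)) (phis : α.ToType → L.Term Var) (ψ : L.Term Var),
      Lg.Deriv (Γ ∪ range phis) ψ ↔ ∃ I ∈ Φ α, Lg.DerivAll Γ (dInst I phis ψ)

/-- The κ-ary global deduction--detachment theorem w.r.t. `Φ`. -/
def GlobalDDT (κ : Cardinal.{u}) (Φ : GFamD L Var) : Prop :=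
  Lg.LocalDDT κ (fun α => {Φ α})

/-- The κ-ary parametrized local deduction--detachment theorem w.r.t. `Φ`. -/
def ParamLocalDDT (κ : Cardinal.{u}) (Φ : PFamD L Var) : Prop :=
  ∀ α : Ordinal.{u}, 0 < α → α < κ.ord →
    ∀ (Γ : Set (L.Term Var)) (phis : α.ToType → L.Term Var) (ψ : L.Term Var),
      Lg.Deriv (Γ ∪ range phis) ψ ↔
        ∃ I ∈ Φ α, ∃ pis : Var → L.Term Var, Lg.DerivAll Γ (pdInst I phis ψ pis)

/-- A protoimplication set: a set `Δ(p, q)` of formulas in two variables with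
`∅ ⊢ Δ(p, p)` and `p, Δ(p, q) ⊢ q` (stated via all instances, by structurality). -/
def HasProtoimplication : Prop :=
  ∃ Δ : Set (L.Term (ULift.{u} Bool)),
    (∀ φ : L.Term Var,
      Lg.DerivAll ∅ ((fun t => t.subst (fun _ => φ)) '' Δ)) ∧
    (∀ φ ψ : L.Term Var,
      Lg.Deriv (insert φ ((fun t => t.subst (fun b => if b.down then ψ else φ)) '' Δ)) ψ)

/-- A rule `Γ ⊢ φ̄` is antiadmissible: substitution instances preserve
inconsistency in every context. -/
def Antiadmissible {ι : Type u} (Γ : Set (L.Term Var)) (phis : ι → L.Term Var) : Prop :=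
  ∀ (σ : Var → L.Term Var) (Δ : Set (L.Term Var)),
    Lg.Inc (range (fun i => (phis i).subst σ) ∪ Δ) →
    Lg.Inc ((fun t => t.subst σ) '' Γ ∪ Δ)

/-- The semisimple companion of a logic: the logic determined by the
simple theories of `Lg`. -/
def companion (Lg : Logic L Var) : Logic L Var where
  Deriv Γ φ := ∀ T : Set (L.Term Var), Lg.IsSimple T →
    ∀ σ : Var → L.Term Var, (fun t => t.subst σ) '' Γ ⊆ T → φ.subst σ ∈ T
  deriv_refl := by
    intro φ T _ σ h
    exact h ⟨φ, rfl, rfl⟩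
  deriv_mono := by
    intro Γ Δ φ hΓ hsub T hT σ h
    exact hΓ T hT σ (fun x hx => h ((Set.image_mono hsub) hx))
  deriv_cut := by
    intro Γ Φ φ hΓ hΦ T hT σ h
    refine hΦ T hT σ ?_
    rintro x ⟨ψ, hψ, rfl⟩
    exact hΓ ψ hψ T hT σ h
  deriv_subst := by
    intro Γ φ σ hΓ T hT τ h
    rw [FirstOrder.Language.Term.subst_subst']
    refine hΓ T hT (fun v => (σ v).subst τ) ?_
    rintro x ⟨ψ, hψ, rfl⟩
    show (ψ.subst fun v => (σ v).subst τ) ∈ T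
    rw [← FirstOrder.Language.Term.subst_subst']
    exact h ⟨ψ.subst σ, ⟨ψ, hψ, rfl⟩, rfl⟩

/-- Equivalence of two parametrized IL families, stated through all of their
instances (which, by structurality, is equivalent to the schematic entailments
`I(p̄, q̄) ⊢ I'(p̄, π̄')`). -/
def FamEquiv (Lg : Logic L Var) (κ : Cardinal.{u}) (Ψ Ψ' : PFam L Var) : Prop :=
  (∀ α : Ordinal.{u}, 0 < α → α < κ.ord →
    ∀ I ∈ Ψ α, ∃ I' ∈ Ψ' α, ∃ pis' : Var → L.Term (α.ToType ⊕ Var),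
      ∀ (phis : α.ToType → L.Term Var) (rhos : Var → L.Term Var),
        Lg.DerivAll (pInst I phis rhos)
          (pInst I' phis (fun v => (pis' v).subst (Sum.elim phis rhos)))) ∧
  (∀ α : Ordinal.{u}, 0 < α → α < κ.ord →
    ∀ I' ∈ Ψ' α, ∃ I ∈ Ψ α, ∃ pis : Var → L.Term (α.ToType ⊕ Var),
      ∀ (phis : α.ToType → L.Term Var) (rhos : Var → L.Term Var),
        Lg.DerivAll (pInst I' phis rhos)
          (pInst I phis (fun v => (pis v).subst (Sum.elim phis rhos))))

end Logic



section Helpers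

open Logic

variable {L : FirstOrder.Language.{u, u}} {Var : Type u}

lemma term_subst_var (t : L.Term Var) : t.subst FirstOrder.Language.Term.var = t := by
  induction t with
  | var => rfl
  | func f ts ih => simp only [Language.Term.subst, ih]

/-- Any derivation of `Lg` is a derivation of its companion. -/
lemma deriv_companion {Lg : Logic L Var} {Γ : Set (L.Term Var)} {φ : L.Term Var}
    (h : Lg.Deriv Γ φ) : (Lg.companion).Deriv Γ φ := by
  intro T hT σ hsub
  exact hT.1 _ (Lg.deriv_mono (Lg.deriv_subst σ h) hsub)

/-- Companion theories are theories of the original logic. -/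
lemma companion_theory {Lg : Logic L Var} {T : Set (L.Term Var)}
    (h : (Lg.companion).IsTheory T) : Lg.IsTheory T :=
  fun φ hd => h φ (deriv_companion hd)

/-- Simple theories of `Lg` are companion theories. -/
lemma simple_companion_theory {Lg : Logic L Var} {T : Set (L.Term Var)}
    (h : Lg.IsSimple T) : (Lg.companion).IsTheory T := by
  intro φ hd
  have := hd T h FirstOrder.Language.Term.var ?_
  · rwa [term_subst_var] at this
  · rintro x ⟨ψ, hψ, rfl⟩
    show ψ.subst FirstOrder.Language.Term.var ∈ T
    rwa [term_subst_var]

lemma simple_iff_companion {Lg : Logic L Var} (hco : Lg.Coatomic) (T : Set (L.Term Var)) :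
    (Lg.companion).IsSimple T ↔ Lg.IsSimple T := by
  constructor
  · rintro ⟨hT, hne, hmax⟩
    obtain ⟨U, hU, hTU⟩ := hco T (companion_theory hT) hne
    have hUT : U = T := hmax U (simple_companion_theory hU) hU.2.1 hTU
    exact hUT ▸ hU
  · rintro ⟨hT, hne, hmax⟩
    refine ⟨simple_companion_theory ⟨hT, hne, hmax⟩, hne, ?_⟩
    intro T' hT' hne' hsub
    exact hmax T' (companion_theory hT') hne' hsub

end Helpers

/-- for a coatomic logic `L`, the semisimple companion is the
largest logic with the same simple theories as `L`, and it is coatomic. -/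
theorem statement_14 {L : FirstOrder.Language.{u, u}} {Var : Type u} (Lg : Logic L Var) (hco : Lg.Coatomic) :
    (∀ T : Set (L.Term Var), (Lg.companion).IsSimple T ↔ Lg.IsSimple T) ∧
    (∀ Lg' : Logic L Var, (∀ T : Set (L.Term Var), Lg'.IsSimple T ↔ Lg.IsSimple T) →
      ∀ (Γ : Set (L.Term Var)) (φ : L.Term Var), Lg'.Deriv Γ φ → (Lg.companion).Deriv Γ φ) ∧
    (Lg.companion).Coatomic := by
  refine ⟨simple_iff_companion hco, ?_, ?_⟩
  · intro Lg' hsame Γ φ h T hT σ hsub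
    have hT' : Lg'.IsSimple T := (hsame T).mpr hT
    exact hT'.1 _ (Lg'.deriv_mono (Lg'.deriv_subst σ h) hsub)
  · intro T hT hne
    obtain ⟨U, hU, hTU⟩ := hco T (companion_theory hT) hne
    exact ⟨U, (simple_iff_companion hco U).mpr hU, hTU⟩
end

section
/- Let L be a coatomic logic and let L' be an extension of L (i.e., Γ ⊢_L φ implies Γ ⊢_{L'} φ). Then L and L' have the same simple theories if and only if for every Γ ⊆ Fm: Γ ⊢_L Fm ⟺ Γ ⊢_{L'} Fm. -/
set_option linter.unusedVariables false

open FirstOrder Set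

universe u

section Aux

variable {L : FirstOrder.Language.{u, u}} {Var : Type u} (Lg : Logic L Var)

lemma closure_isTheory (Γ : Set (L.Term Var)) :
    Lg.IsTheory {ψ | Lg.Deriv Γ ψ} :=
  fun _ h => Lg.deriv_cut (fun _ hψ => hψ) h

lemma logicSubsetClosure (Γ : Set (L.Term Var)) : Γ ⊆ {ψ | Lg.Deriv Γ ψ} :=
  fun φ hφ => Lg.deriv_mono (Lg.deriv_refl φ) (Set.singleton_subset_iff.mpr hφ)

lemma theory_inc_univ {T : Set (L.Term Var)} (hT : Lg.IsTheory T) (h : Lg.Inc T) :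
    T = Set.univ :=
  Set.eq_univ_of_forall fun φ => hT φ (h φ)

/-- If `T` is `Lg`-simple and `φ ∉ T`, then `T ∪ {φ}` is `Lg`-inconsistent. -/
lemma simple_inc_insert (hco : Lg.Coatomic) {T : Set (L.Term Var)}
    (hT : Lg.IsSimple T) {φ : L.Term Var} (hφ : φ ∉ T) :
    Lg.Inc (insert φ T) := by
  by_contra h
  have hC : {ψ | Lg.Deriv (insert φ T) ψ} ≠ Set.univ := by
    intro he
    exact h fun ψ => Set.eq_univ_iff_forall.mp he ψ
  obtain ⟨U, hU, hsub⟩ := hco _ (closure_isTheory Lg _) hC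
  have hTU : T ⊆ U := fun x hx =>
    hsub (logicSubsetClosure Lg _ (Set.mem_insert_of_mem _ hx))
  have := hT.2.2 U hU.1 hU.2.1 hTU
  exact hφ (this ▸ hsub (logicSubsetClosure Lg _ (Set.mem_insert _ _)))

end Aux

/-- an extension `L'` of a coatomic logic `L` has the same simple
theories as `L` iff it has the same inconsistent sets as `L`. -/
theorem statement_15 {L : FirstOrder.Language.{u, u}} {Var : Type u} (Lg Lg' : Logic L Var) (hco : Lg.Coatomic)
    (hext : ∀ (Γ : Set (L.Term Var)) (φ : L.Term Var), Lg.Deriv Γ φ → Lg'.Deriv Γ φ) :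
    (∀ T : Set (L.Term Var), Lg.IsSimple T ↔ Lg'.IsSimple T) ↔
      (∀ Γ : Set (L.Term Var), Lg.Inc Γ ↔ Lg'.Inc Γ) := by
  constructor
  · -- same simple theories ⇒ same inconsistent sets
    intro hsimp Γ
    constructor
    · intro h φ; exact hext _ _ (h φ)
    · intro h
      by_contra hnot
      have hC : {ψ | Lg.Deriv Γ ψ} ≠ Set.univ := by
        intro he
        exact hnot fun ψ => Set.eq_univ_iff_forall.mp he ψ
      obtain ⟨U, hU, hsub⟩ := hco _ (closure_isTheory Lg Γ) hC
      have hU' : Lg'.IsSimple U := (hsimp U).mp hU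
      have hΓU : Γ ⊆ U := (logicSubsetClosure Lg Γ).trans hsub
      have : Lg'.Inc U := fun ψ => Lg'.deriv_mono (h ψ) hΓU
      exact hU'.2.1 (theory_inc_univ Lg' hU'.1 this)
  · -- same inconsistent sets ⇒ same simple theories
    intro hinc T
    have fwd : ∀ T : Set (L.Term Var), Lg.IsSimple T → Lg'.IsSimple T := by
      intro T hT
      have hth' : Lg'.IsTheory T := by
        intro φ hφ
        by_contra hmem
        have h1 : Lg'.Inc (insert φ T) :=
          (hinc _).mp (simple_inc_insert Lg hco hT hmem)
        have h2 : Lg'.Inc T := by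
          intro ψ
          refine Lg'.deriv_cut ?_ (h1 ψ)
          intro χ hχ
          rcases hχ with rfl | hχ
          · exact hφ
          · exact Lg'.deriv_mono (Lg'.deriv_refl χ) (Set.singleton_subset_iff.mpr hχ)
        exact hT.2.1 (theory_inc_univ Lg hT.1 ((hinc T).mpr h2))
      refine ⟨hth', hT.2.1, ?_⟩
      intro T' hT' hT'ne hsub
      by_contra hne
      obtain ⟨φ, hφT', hφT⟩ : ∃ φ, φ ∈ T' ∧ φ ∉ T := by
        by_contra hc
        push_neg at hc
        exact hne (Set.Subset.antisymm hc hsub)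
      have h1 : Lg'.Inc (insert φ T) :=
        (hinc _).mp (simple_inc_insert Lg hco hT hφT)
      have h2 : Lg'.Inc T' := fun ψ =>
        Lg'.deriv_mono (h1 ψ) (Set.insert_subset hφT' hsub)
      exact hT'ne (theory_inc_univ Lg' hT' h2)
    constructor
    · exact fwd T
    · intro hT'
      have hth : Lg.IsTheory T := fun φ h => hT'.1 φ (hext _ _ h)
      obtain ⟨U, hU, hsub⟩ := hco T hth hT'.2.1
      have hU' : Lg'.IsSimple U := fwd U hU
      have : U = T := hT'.2.2 U hU'.1 hU'.2.1 hsub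
      exact this ▸ hU
end

section
/- Let L be a coatomic logic. A rule Γ ⊢ φ̄ (φ̄ a tuple of formulas) is antiadmissible in L if and only if Γ ⊢_{L^σ} φᵢ for every φᵢ in φ̄, where L^σ is the semisimple companion of L. -/
set_option linter.unusedVariables false

open FirstOrder Set

universe u

/-- a rule `Γ ⊢ φ̄` is antiadmissible in a coatomic logic `L` iff
it is valid in the semisimple companion of `L`. -/
theorem statement_16 {L : FirstOrder.Language.{u, u}} {Var : Type u} (Lg : Logic L Var) (hco : Lg.Coatomic)
    {ι : Type u} (Γ : Set (L.Term Var)) (phis : ι → L.Term Var) :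
    Lg.Antiadmissible Γ phis ↔ ∀ i, (Lg.companion).Deriv Γ (phis i) := by
  constructor
  · intro ha i T hT σ hΓT
    by_contra hmem
    have hincT : Lg.Inc (range (fun j => (phis j).subst σ) ∪ T) := by
      intro ψ
      have h1 : Lg.Inc (insert ((phis i).subst σ) T) := by
        intro χ
        by_contra hχ
        have hth : Lg.IsTheory {ρ | Lg.Deriv (insert ((phis i).subst σ) T) ρ} := by
          intro ρ hρ
          exact Lg.deriv_cut (fun ξ hξ => hξ) hρ
        have hne : {ρ | Lg.Deriv (insert ((phis i).subst σ) T) ρ} ≠ univ := by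
          intro h
          rw [Set.eq_univ_iff_forall] at h
          exact hχ (h χ)
        have hsub : T ⊆ {ρ | Lg.Deriv (insert ((phis i).subst σ) T) ρ} := by
          intro ρ hρ
          exact Lg.deriv_mono (Lg.deriv_refl ρ) (by intro x hx; simp_all)
        have heq := hT.2.2 _ hth hne hsub
        have hd : (phis i).subst σ ∈ {ρ | Lg.Deriv (insert ((phis i).subst σ) T) ρ} :=
          Lg.deriv_mono (Lg.deriv_refl _)
            (by intro x hx; rw [Set.mem_singleton_iff] at hx; exact hx ▸ Set.mem_insert _ _)
        exact hmem (heq ▸ hd)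
      exact Lg.deriv_mono (h1 ψ) (by
        intro x hx
        rcases hx with hx | hx
        · subst hx; exact Or.inl ⟨i, rfl⟩
        · exact Or.inr hx)
    have h2 := ha σ T hincT
    have hsub2 : (fun t => t.subst σ) '' Γ ∪ T ⊆ T := by
      intro x hx
      rcases hx with hx | hx
      · exact hΓT hx
      · exact hx
    have : T = univ := by
      apply eq_univ_of_forall
      intro ψ
      exact hT.1 ψ (Lg.deriv_mono (h2 ψ) hsub2)
    exact hT.2.1 this
  · intro h σ Δ hinc
    by_contra hninc
    simp only [Logic.Inc, not_forall] at hninc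
    obtain ⟨ψ, hψ⟩ := hninc
    set C := {ρ | Lg.Deriv ((fun t => t.subst σ) '' Γ ∪ Δ) ρ} with hC
    have hth : Lg.IsTheory C := fun ρ hρ => Lg.deriv_cut (fun ξ hξ => hξ) hρ
    have hne : C ≠ univ := by
      intro hu
      rw [Set.eq_univ_iff_forall] at hu
      exact hψ (hu ψ)
    obtain ⟨T, hT, hCT⟩ := hco C hth hne
    have hbase : (fun t => t.subst σ) '' Γ ∪ Δ ⊆ T := by
      intro x hx
      exact hCT (Lg.deriv_mono (Lg.deriv_refl x) (by intro y hy; simp_all))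
    have hΓT : (fun t => t.subst σ) '' Γ ⊆ T := fun x hx => hbase (Or.inl hx)
    have hphis : ∀ j, (phis j).subst σ ∈ T := fun j => h j T hT σ hΓT
    have hsub : range (fun j => (phis j).subst σ) ∪ Δ ⊆ T := by
      intro x hx
      rcases hx with ⟨j, rfl⟩ | hx
      · exact hphis j
      · exact hbase (Or.inr hx)
    have : T = univ := eq_univ_of_forall fun ρ => hT.1 ρ (Lg.deriv_mono (hinc ρ) hsub)
    exact hT.2.1 this
end

section
/- Let L be a coatomic logic with the simple local IL (with respect to some family). Then the theories of the semisimple companion L^σ are precisely the semisimple theories of L; in particular, L^σ is a semisimple logic. -/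
set_option linter.unusedVariables false

open FirstOrder Set

universe u

theorem FirstOrder.Language.Term.subst_var' {L : FirstOrder.Language.{u, u}} {α : Type u}
    (t : L.Term α) : t.subst Language.Term.var = t := by
  induction t with
  | var => rfl
  | func f ts ih => simp only [Language.Term.subst, ih]

namespace Logic

variable {L : FirstOrder.Language.{u, u}} {Var : Type u} (Lg : Logic L Var)

lemma companion_deriv_of_deriv {Γ : Set (L.Term Var)} {φ : L.Term Var}
    (h : Lg.Deriv Γ φ) : Lg.companion.Deriv Γ φ := by
  intro T hT σ hσ
  exact hT.1 _ (Lg.deriv_mono (Lg.deriv_subst σ h) hσ)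

lemma isTheory_of_companion {T : Set (L.Term Var)} (h : Lg.companion.IsTheory T) :
    Lg.IsTheory T :=
  fun φ hφ => h φ (Lg.companion_deriv_of_deriv hφ)

lemma simple_companion_theory {U : Set (L.Term Var)} (hU : Lg.IsSimple U) :
    Lg.companion.IsTheory U := by
  intro φ hφ
  have := hφ U hU Language.Term.var (by
    rintro x ⟨ψ, hψ, rfl⟩
    show ψ.subst Language.Term.var ∈ U
    rwa [FirstOrder.Language.Term.subst_var'])
  rwa [FirstOrder.Language.Term.subst_var'] at this

lemma simple_companion_simple {U : Set (L.Term Var)} (hU : Lg.IsSimple U) :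
    Lg.companion.IsSimple U := by
  refine ⟨Lg.simple_companion_theory hU, hU.2.1, fun T' hT' hne hsub => ?_⟩
  exact hU.2.2 T' (Lg.isTheory_of_companion hT') hne hsub

/-- If `U` is simple and `φ ∉ U`, then `U ∪ {φ}` is inconsistent. -/
lemma simple_inc {U : Set (L.Term Var)} (hU : Lg.IsSimple U) {φ : L.Term Var}
    (hφ : φ ∉ U) : Lg.Inc (U ∪ {φ}) := by
  by_contra h
  obtain ⟨ψ, hψ⟩ := not_forall.1 h
  set W : Set (L.Term Var) := {χ | Lg.Deriv (U ∪ {φ}) χ} with hWdef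
  have hWth : Lg.IsTheory W := by
    intro χ hχ
    exact Lg.deriv_cut (fun ρ hρ => hρ) hχ
  have hWne : W ≠ univ := by
    intro h
    have : ψ ∈ W := h ▸ mem_univ ψ
    exact hψ this
  have hUW : U ⊆ W := fun χ hχ =>
    Lg.deriv_mono (Lg.deriv_refl χ) (by intro x hx; exact Or.inl (hx ▸ hχ))
  have := hU.2.2 W hWth hWne hUW
  apply hφ
  rw [← this]
  exact Lg.deriv_mono (Lg.deriv_refl φ) (by intro x hx; exact Or.inr hx)

lemma inc_mono {Γ Δ : Set (L.Term Var)} (h : Lg.Inc Γ) (hs : Γ ⊆ Δ) : Lg.Inc Δ :=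
  fun φ => Lg.deriv_mono (h φ) hs

/-- Key lemma: if `φ` belongs to every simple theory containing `T`, then
`T ⊢ φ` in the companion logic. -/
lemma key {Ψ : LFam L Var} (hco : Lg.Coatomic) (hsil : Lg.SimpleLocalIL 2 Ψ)
    (T : Set (L.Term Var)) (φ : L.Term Var)
    (hφ : ∀ U, Lg.IsSimple U → T ⊆ U → φ ∈ U) : Lg.companion.Deriv T φ := by
  intro U hU σ hσ
  by_contra hmem
  have hone : (0 : Ordinal.{u}) < 1 := zero_lt_one
  have h12 : (1 : Ordinal.{u}) < (2 : Cardinal.{u}).ord := by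
    rw [Cardinal.lt_ord, Ordinal.card_one]
    exact Cardinal.one_lt_two
  have hne1 : Nonempty (Ordinal.ToType (1 : Ordinal.{u})) :=
    Ordinal.nonempty_toType_iff.2 one_ne_zero
  -- V = σ-preimage of U
  set V : Set (L.Term Var) := {ψ | ψ.subst σ ∈ U} with hVdef
  have hVth : Lg.IsTheory V := by
    intro ψ hψ
    have := Lg.deriv_subst σ hψ
    exact hU.1 _ (Lg.deriv_mono this (by rintro x ⟨χ, hχ, rfl⟩; exact hχ))
  have hTV : T ⊆ V := fun ψ hψ => hσ ⟨ψ, hψ, rfl⟩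
  have hφV : φ ∉ V := hmem
  -- U ∪ {σφ} is inconsistent
  have hinc : Lg.Inc (U ∪ {φ.subst σ}) := Lg.simple_inc hU hmem
  have hinc' : Lg.Inc (U ∪ range (fun _ : Ordinal.ToType (1 : Ordinal.{u}) => φ.subst σ)) := by
    rwa [Set.range_const]
  obtain ⟨I, hI, hder⟩ := hsil.2 1 hone h12 U hU _ hinc'
  -- lInst I φ ⊆ V
  have hIV : Logic.lInst I (fun _ : Ordinal.ToType (1 : Ordinal.{u}) => φ) ⊆ V := by
    rintro x ⟨t, ht, rfl⟩
    show (t.subst _).subst σ ∈ U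
    rw [FirstOrder.Language.Term.subst_subst']
    exact hU.1 _ (hder _ ⟨t, ht, rfl⟩)
  -- V is nontrivial, extend to simple W
  have hVne : V ≠ univ := fun h => hφV (h ▸ (mem_univ φ : φ ∈ univ))
  obtain ⟨W, hW, hVW⟩ := hco V hVth hVne
  have hφW : φ ∈ W := hφ W hW (hTV.trans hVW)
  -- {φ} ∪ lInst I φ is inconsistent, contained in W
  have hincW : Lg.Inc (range (fun _ : Ordinal.ToType (1 : Ordinal.{u}) => φ) ∪
      Logic.lInst I (fun _ => φ)) := hsil.1 1 hone h12 I hI _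
  have : Lg.Inc W := Lg.inc_mono hincW (by
    rintro x (⟨i, rfl⟩ | hx)
    · exact hφW
    · exact hVW (hIV hx))
  exact hW.2.1 (eq_univ_of_forall fun ψ => hW.1 ψ (this ψ))

end Logic


/-- for a coatomic logic with the simple local IL, the theories of
the semisimple companion are exactly the semisimple theories of `L`; in
particular the companion is a semisimple logic. -/
theorem statement_18 {L : FirstOrder.Language.{u, u}} {Var : Type u} (Lg : Logic L Var) (hco : Lg.Coatomic)
    (hsil : ∃ Ψ : LFam L Var, Lg.SimpleLocalIL 2 Ψ) :
    (∀ T : Set (L.Term Var), (Lg.companion).IsTheory T ↔ Lg.IsSemisimple T) ∧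
    (Lg.companion).Semisimple := by
  obtain ⟨Ψ, hsil⟩ := hsil
  have main : ∀ T : Set (L.Term Var), (Lg.companion).IsTheory T ↔ Lg.IsSemisimple T := by
    intro T
    constructor
    · intro hT
      refine ⟨{U | Lg.IsSimple U ∧ T ⊆ U}, fun U hU => hU.1, ?_⟩
      apply Set.Subset.antisymm
      · intro φ hφ
        exact Set.mem_sInter.2 fun U hU => hU.2 hφ
      · intro φ hφ
        exact hT φ (Lg.key hco hsil T φ (fun U hU hTU =>
          Set.mem_sInter.1 hφ U ⟨hU, hTU⟩))
    · rintro ⟨S, hS, rfl⟩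
      intro φ hφ
      refine Set.mem_sInter.2 fun U hU => ?_
      have := hφ U (hS U hU) FirstOrder.Language.Term.var (by
        rintro x ⟨ψ, hψ, rfl⟩
        show ψ.subst FirstOrder.Language.Term.var ∈ U
        rw [FirstOrder.Language.Term.subst_var']
        exact Set.mem_sInter.1 hψ U hU)
      rwa [FirstOrder.Language.Term.subst_var'] at this
  refine ⟨main, fun T hT => ?_⟩
  refine ⟨{U | Lg.IsSimple U ∧ T ⊆ U}, fun U hU => Lg.simple_companion_simple hU.1, ?_⟩
  apply Set.Subset.antisymm
  · intro φ hφ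
    exact Set.mem_sInter.2 fun U hU => hU.2 hφ
  · intro φ hφ
    exact hT φ (Lg.key hco hsil T φ (fun U hU hTU => Set.mem_sInter.1 hφ U ⟨hU, hTU⟩))
end
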